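/- Let I and J be sets of nonnegative real numbers satisfying the descending chain condition, and assume 0 ∉ J. Then the set T := {(1 − i)/j | i ∈ I^+ ∩ [0,1], j ∈ J^+, j > 0, (1 − i)/j ≥ 0} satisfies the ascending chain condition, i.e., T contains no infinite strictly increasing sequence. -/

import Mathlib

/-- A set of reals satisfies the descending chain condition if it contains
no infinite strictly decreasing sequence. -/
def DCC (S : Set ℝ) : Prop := ¬ ∃ f : ℕ → ℝ, (∀ n, f n ∈ S) ∧ StrictAnti f

/-- A set of reals satisfies the ascending chain condition if it contains
no infinite strictly increasing sequence. -/
def ACC (S : Set ℝ) : Prop := ¬ ∃ f : ℕ → ℝ, (∀ n, f n ∈ S) ∧ StrictMono f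

/-- `I⁺ = {0} ∪ {x ∈ [0,1] | x is a finite (nonempty) sum of elements of I}`. -/
def plusSet (I : Set ℝ) : Set ℝ :=
  {0} ∪ {x | 0 ≤ x ∧ x ≤ 1 ∧ ∃ l : List ℝ, l ≠ [] ∧ (∀ j ∈ l, j ∈ I) ∧ l.sum = x}

/-- `D(I) = {a ≤ 1 | a = (m - 1 + f)/m, m ∈ ℤ_{>0}, f ∈ I⁺}`. -/
def DSet (I : Set ℝ) : Set ℝ :=
  {a | a ≤ 1 ∧ ∃ m : ℕ, 0 < m ∧ ∃ f ∈ plusSet I, a = ((m : ℝ) - 1 + f) / m}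

/-- `D_d(I) = {a ≤ 1 | a = (m - 1 + f + k·d)/m, k, m ∈ ℤ_{>0}, f ∈ I⁺}`. -/
def DdSet (d : ℝ) (I : Set ℝ) : Set ℝ :=
  {a | a ≤ 1 ∧ ∃ k m : ℕ, 0 < k ∧ 0 < m ∧ ∃ f ∈ plusSet I,
    a = ((m : ℝ) - 1 + f + (k : ℝ) * d) / m}

/-- A set of reals with DCC is well-founded under `<`. -/
lemma dcc_isWF {S : Set ℝ} (h : DCC S) : S.IsWF := by
  rw [Set.isWF_iff_no_descending_seq]
  intro f hf hmem
  exact h ⟨f, fun n => hmem n, hf⟩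

/-- `plusSet I` is contained in the additive submonoid closure of `I`. -/
lemma plusSet_subset_closure (I : Set ℝ) :
    plusSet I ⊆ (AddSubmonoid.closure I : Set ℝ) := by
  rintro x (rfl | ⟨-, -, l, -, hl, rfl⟩)
  · exact AddSubmonoid.zero_mem _
  · exact AddSubmonoid.list_sum_mem _ fun y hy => AddSubmonoid.subset_closure (hl y hy)

/-- If `I` consists of nonnegative reals and has DCC, then `plusSet I` is
partially well-ordered. -/
lemma plusSet_isPWO {I : Set ℝ} (hI : ∀ x ∈ I, 0 ≤ x) (h : DCC I) :
    (plusSet I).IsPWO :=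
  (Set.IsPWO.addSubmonoid_closure hI (dcc_isWF h).isPWO).mono (plusSet_subset_closure I)

theorem lct_coreg_zero_ACC (I J : Set ℝ) (hI : ∀ x ∈ I, 0 ≤ x)
    (hJ : ∀ x ∈ J, 0 ≤ x) (hIdcc : DCC I) (hJdcc : DCC J) (hJ0 : (0:ℝ) ∉ J) :
    ACC {t : ℝ | ∃ i ∈ plusSet I, i ≤ 1 ∧ ∃ j ∈ plusSet J, 0 < j ∧
      t = (1 - i) / j ∧ 0 ≤ t} := by
  rintro ⟨f, hf, hmono⟩
  simp only [Set.mem_setOf_eq] at hf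
  choose i hi hle j hj hjpos heq hge using hf
  obtain ⟨g, hig⟩ := (plusSet_isPWO hI hIdcc).exists_monotone_subseq hi
  obtain ⟨g', hjg⟩ :=
    (plusSet_isPWO hJ hJdcc).exists_monotone_subseq (f := j ∘ g) fun n => hj _
  set a := g (g' 0) with ha
  set b := g (g' 1) with hb
  have hab : f a < f b := hmono (g.strictMono (g'.strictMono Nat.zero_lt_one))
  have hia : i a ≤ i b := hig (g'.monotone (Nat.zero_le 1))
  have hja : j a ≤ j b := hjg (Nat.zero_le 1)
  have hnum : 0 ≤ 1 - i a := by
    have h1 := hge a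
    rw [heq a] at h1
    have := (le_div_iff₀ (hjpos a)).mp h1
    linarith
  have : f b ≤ f a := by
    rw [heq a, heq b]
    exact div_le_div₀ hnum (by linarith) (hjpos a) hja
  linarith
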